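/- For m ≥ 0, 0 ≤ s ≤ m, and Im τ > 0, the function Φ₁(τ,z₁,z₂), viewed as a meromorphic function of z₁ with z₂ fixed, has simple poles exactly at z₁ = n + jτ (n, j ∈ ℤ), and the residue at z₁ = n + jτ equals −(1/(2πi)) e^{−2πij(m+1)z₂}. -/

import Mathlib

set_option maxHeartbeats 1000000


noncomputable section

open Complex

/-- The mock theta numerator `Φ₁^{[m;s]}(τ,z₁,z₂)`, with `q = e^{2πiτ}`. -/
def Phi1 (m : ℕ) (s : ℤ) (τ z₁ z₂ : ℂ) : ℂ :=
  ∑' j : ℤ,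
    Complex.exp (2 * (Real.pi : ℂ) * I * ((m : ℂ) + 1) * (j : ℂ) * (z₁ + z₂)) *
      Complex.exp (-(2 * (Real.pi : ℂ) * I) * (s : ℂ) * z₁) *
      Complex.exp (2 * (Real.pi : ℂ) * I * τ) ^ (j ^ 2 * ((m : ℤ) + 1) - j * s) /
      (1 - Complex.exp (2 * (Real.pi : ℂ) * I * z₁) * Complex.exp (2 * (Real.pi : ℂ) * I * τ) ^ j)

def cc : ℂ := 2 * (Real.pi : ℂ) * Complex.I

lemma cc_ne : cc ≠ 0 := by
  simp [cc, Complex.ext_iff, Real.pi_ne_zero, I_ne_zero]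

lemma re_cc_mul (z : ℂ) : (cc * z).re = -(2 * Real.pi * z.im) := by
  simp [cc, Complex.mul_re, Complex.mul_im]

def NN (m : ℕ) (s : ℤ) (τ z₂ : ℂ) (j : ℤ) (w : ℂ) : ℂ :=
  ((m:ℂ)+1) * (j:ℂ) * (w + z₂) - (s:ℂ) * w + ((j:ℂ)^2*((m:ℂ)+1) - (j:ℂ)*(s:ℂ)) * τ

def gg (m : ℕ) (s : ℤ) (τ z₂ : ℂ) (j : ℤ) (w : ℂ) : ℂ :=
  Complex.exp (cc * NN m s τ z₂ j w) / (1 - Complex.exp (cc * (w + (j:ℂ) * τ)))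

lemma NN_im (m : ℕ) (s : ℤ) (τ z₂ : ℂ) (j : ℤ) (w : ℂ) :
    (NN m s τ z₂ j w).im
      = ((m:ℝ)+1) * (j:ℝ) * (w.im + z₂.im) - (s:ℝ) * w.im + ((j:ℝ)^2*((m:ℝ)+1) - (j:ℝ)*(s:ℝ)) * τ.im := by
  have h1 : (((m:ℂ)+1) * (j:ℂ)) = ((((m:ℝ)+1)*(j:ℝ) : ℝ) : ℂ) := by push_cast; ring
  have h2 : ((s:ℂ)) = (((s:ℝ) : ℝ) : ℂ) := by push_cast; ring
  have h3 : ((j:ℂ)^2*((m:ℂ)+1) - (j:ℂ)*(s:ℂ)) = (((j:ℝ)^2*((m:ℝ)+1) - (j:ℝ)*(s:ℝ) : ℝ) : ℂ) := by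
    push_cast; ring
  rw [NN, h3, h1, h2, Complex.add_im, Complex.sub_im, Complex.im_ofReal_mul,
    Complex.im_ofReal_mul, Complex.im_ofReal_mul, Complex.add_im]

lemma phi1_eq (m : ℕ) (s : ℤ) (τ z₂ w : ℂ) :
    Phi1 m s τ w z₂ = ∑' j : ℤ, gg m s τ z₂ j w := by
  unfold Phi1 gg NN
  congr 1
  funext j
  rw [show Complex.exp (2 * (Real.pi : ℂ) * I * τ) ^ (j ^ 2 * ((m : ℤ) + 1) - j * s)
      = Complex.exp (((j ^ 2 * ((m : ℤ) + 1) - j * s : ℤ) : ℂ) * (2 * (Real.pi : ℂ) * I * τ))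
      from (Complex.exp_int_mul _ _).symm,
    show Complex.exp (2 * (Real.pi : ℂ) * I * τ) ^ j
      = Complex.exp ((j : ℂ) * (2 * (Real.pi : ℂ) * I * τ)) from (Complex.exp_int_mul _ _).symm,
    ← Complex.exp_add, ← Complex.exp_add, ← Complex.exp_add]
  congr 2
  · push_cast [cc]; ring
  · rw [cc]; ring

lemma u_summable : Summable (fun j : ℤ => 2 * Real.exp (-1) ^ j.natAbs) := by
  apply Summable.mul_left
  apply Summable.of_nat_of_neg
  · simpa using summable_geometric_of_lt_one (le_of_lt (Real.exp_pos _))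
      (Real.exp_lt_one_iff.mpr (by norm_num))
  · simpa using summable_geometric_of_lt_one (le_of_lt (Real.exp_pos _))
      (Real.exp_lt_one_iff.mpr (by norm_num))

lemma tail_bound (m : ℕ) (s : ℤ) (τ z₂ : ℂ) (hτ : 0 < τ.im) (T : ℝ) (hT : 0 ≤ T) :
    ∃ J : ℕ, 1 ≤ J ∧ ∀ j : ℤ, (J:ℤ) ≤ |j| → ∀ w : ℂ, |w.im| ≤ T →
      (1/2 : ℝ) ≤ ‖1 - Complex.exp (cc * (w + (j:ℂ)*τ))‖ ∧
      ‖gg m s τ z₂ j w‖ ≤ 2 * Real.exp (-1) ^ j.natAbs := by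
  have ha0 : 0 < ((m:ℝ)+1) * τ.im := by positivity
  obtain ⟨J₀, hJ₀⟩ := exists_nat_ge ((T+1)/τ.im)
  obtain ⟨J₁, hJ₁⟩ := exists_nat_ge
    ((((m:ℝ)+1) * (T + |z₂.im|) + |(s:ℝ)| * τ.im + 1 + |(s:ℝ)| * T)/(((m:ℝ)+1) * τ.im))
  refine ⟨J₀ + J₁ + 1, by omega, ?_⟩
  intro j hj w hw
  have htj : ((J₀ + J₁ + 1 : ℕ):ℝ) ≤ |(j:ℝ)| := by
    rw [← Int.cast_abs]; exact_mod_cast hj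
  have ht1 : (1:ℝ) ≤ |(j:ℝ)| := by
    refine le_trans ?_ htj; push_cast; linarith
  have hceil1 : (T+1)/τ.im ≤ ((J₀ + J₁ + 1 : ℕ):ℝ) := by push_cast; push_cast at hJ₀; linarith
  have hceil2 : (((m:ℝ)+1) * (T + |z₂.im|) + |(s:ℝ)| * τ.im + 1 + |(s:ℝ)| * T)/(((m:ℝ)+1) * τ.im)
      ≤ ((J₀ + J₁ + 1 : ℕ):ℝ) := by push_cast; push_cast at hJ₁; linarith
  have hTt : T + 1 ≤ |(j:ℝ)| * τ.im := by
    rw [div_le_iff₀ hτ] at hceil1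
    nlinarith
  have hABt : (((m:ℝ)+1) * (T + |z₂.im|) + |(s:ℝ)| * τ.im + 1 + |(s:ℝ)| * T)
      ≤ (((m:ℝ)+1) * τ.im) * |(j:ℝ)| := by
    rw [div_le_iff₀ ha0] at hceil2
    nlinarith
  have hwb := abs_le.mp hw
  -- denominator bound
  have hwim : (w + (j:ℂ)*τ).im = w.im + (j:ℝ) * τ.im := by simp
  have hnorme : ‖Complex.exp (cc * (w + (j:ℂ)*τ))‖
      = Real.exp (-(2*Real.pi*(w.im + (j:ℝ)*τ.im))) := by
    rw [Complex.norm_exp, re_cc_mul, hwim]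
  have hexp1 : Real.exp (-1 : ℝ) ≤ 1/2 := by
    rw [Real.exp_neg, inv_le_comm₀ (Real.exp_pos _) (by norm_num)]
    linarith [Real.add_one_le_exp (1:ℝ)]
  have hpi : (1:ℝ) ≤ 2 * Real.pi := by nlinarith [Real.pi_gt_three]
  have hden : (1/2 : ℝ) ≤ ‖1 - Complex.exp (cc * (w + (j:ℂ)*τ))‖ := by
    rcases lt_or_ge (j:ℝ) 0 with hjneg | hjpos
    · have htj' : |(j:ℝ)| = -(j:ℝ) := abs_of_neg hjneg
      have hx : w.im + (j:ℝ)*τ.im ≤ -1 := by nlinarith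
      have h2 : (2:ℝ) ≤ ‖Complex.exp (cc * (w + (j:ℂ)*τ))‖ := by
        rw [hnorme]
        have h3 : (1:ℝ) ≤ -(2*Real.pi*(w.im + (j:ℝ)*τ.im)) := by nlinarith
        linarith [Real.add_one_le_exp (-(2*Real.pi*(w.im + (j:ℝ)*τ.im)))]
      calc (1/2:ℝ) ≤ ‖Complex.exp (cc * (w + (j:ℂ)*τ))‖ - ‖(1:ℂ)‖ := by
            rw [norm_one]; linarith
        _ ≤ ‖Complex.exp (cc * (w + (j:ℂ)*τ)) - 1‖ := norm_sub_norm_le _ _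
        _ = ‖1 - Complex.exp (cc * (w + (j:ℂ)*τ))‖ := norm_sub_rev _ _
    · have htj' : |(j:ℝ)| = (j:ℝ) := _root_.abs_of_nonneg hjpos
      have hx : (1:ℝ) ≤ w.im + (j:ℝ)*τ.im := by nlinarith
      have h2 : ‖Complex.exp (cc * (w + (j:ℂ)*τ))‖ ≤ 1/2 := by
        rw [hnorme]
        refine le_trans (Real.exp_le_exp.mpr ?_) hexp1
        nlinarith
      calc (1/2:ℝ) = ‖(1:ℂ)‖ - 1/2 := by rw [norm_one]; norm_num
        _ ≤ ‖(1:ℂ)‖ - ‖Complex.exp (cc * (w + (j:ℂ)*τ))‖ := by linarith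
        _ ≤ ‖1 - Complex.exp (cc * (w + (j:ℂ)*τ))‖ := norm_sub_norm_le _ _
  refine ⟨hden, ?_⟩
  -- numerator bound
  have hnu : |(j:ℝ)| ≤ (NN m s τ z₂ j w).im := by
    rw [NN_im]
    have habs1 : |(j:ℝ) * (w.im + z₂.im)| ≤ |(j:ℝ)| * (T + |z₂.im|) := by
      rw [abs_mul]
      refine mul_le_mul_of_nonneg_left ?_ (abs_nonneg _)
      exact le_trans (abs_add_le _ _) (add_le_add hw le_rfl)
    have habs2 : |(s:ℝ) * w.im| ≤ |(s:ℝ)| * T := by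
      rw [abs_mul]
      exact mul_le_mul_of_nonneg_left hw (abs_nonneg _)
    have habs3 : |(j:ℝ) * (s:ℝ)| = |(j:ℝ)| * |(s:ℝ)| := abs_mul _ _
    have h1 := neg_abs_le ((j:ℝ) * (w.im + z₂.im))
    have h3 := neg_abs_le ((j:ℝ) * (s:ℝ))
    have hsq : (j:ℝ)^2 = |(j:ℝ)|^2 := ((_root_.sq_abs ((j:ℝ))).symm)
    have e1 : -(|(j:ℝ)| * (T + |z₂.im|)) ≤ (j:ℝ) * (w.im + z₂.im) := le_trans (neg_le_neg habs1) h1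
    have e2 : (s:ℝ) * w.im ≤ |(s:ℝ)| * T := le_trans (le_abs_self _) habs2
    have e3 : (j:ℝ) * (s:ℝ) ≤ |(j:ℝ)| * |(s:ℝ)| := habs3 ▸ le_abs_self _
    nlinarith [mul_le_mul_of_nonneg_left e1 (by positivity : (0:ℝ) ≤ (m:ℝ)+1),
      mul_le_mul_of_nonneg_right e3 hτ.le,
      mul_le_mul_of_nonneg_left hABt (abs_nonneg ((j:ℝ))),
      abs_nonneg ((s:ℝ)), abs_nonneg z₂.im,
      mul_le_mul_of_nonneg_left ht1 (by positivity : (0:ℝ) ≤ |(s:ℝ)| * T)]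
  have hna : ‖Complex.exp (cc * NN m s τ z₂ j w)‖ ≤ Real.exp (-1) ^ j.natAbs := by
    rw [Complex.norm_exp, re_cc_mul]
    have he : Real.exp (-1:ℝ) ^ j.natAbs = Real.exp (-(j.natAbs : ℝ)) := by
      rw [← Real.exp_nat_mul]; norm_num
    rw [he]
    apply Real.exp_le_exp.mpr
    have hc : ((j.natAbs : ℝ)) = |(j:ℝ)| := by rw [Nat.cast_natAbs, Int.cast_abs]
    rw [hc]
    nlinarith
  have h0 : (0:ℝ) < ‖1 - Complex.exp (cc * (w + (j:ℂ)*τ))‖ := lt_of_lt_of_le (by norm_num) hden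
  calc ‖gg m s τ z₂ j w‖
      = ‖Complex.exp (cc * NN m s τ z₂ j w)‖ / ‖1 - Complex.exp (cc * (w + (j:ℂ)*τ))‖ := by
        rw [gg, norm_div]
    _ ≤ Real.exp (-1) ^ j.natAbs / (1/2 : ℝ) := by
        apply div_le_div₀ (by positivity) hna (by norm_num) hden
    _ = 2 * Real.exp (-1) ^ j.natAbs := by ring

lemma gg_summable (m : ℕ) (s : ℤ) (τ z₂ : ℂ) (hτ : 0 < τ.im) (w : ℂ) :
    Summable (fun j : ℤ => gg m s τ z₂ j w) := by
  obtain ⟨J, hJ1, hJ⟩ := tail_bound m s τ z₂ hτ |w.im| (abs_nonneg _)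
  apply Summable.of_norm_bounded_eventually u_summable
  rw [Filter.eventually_cofinite]
  apply Set.Finite.subset (Set.finite_Icc (-(J:ℤ)) (J:ℤ))
  intro j hj
  simp only [Set.mem_setOf_eq] at hj
  by_contra hmem
  simp only [Set.mem_Icc, not_and_or, not_le] at hmem
  exact hj (hJ j (le_abs.mpr (by omega)) w le_rfl).2

lemma gg_diffAt (m : ℕ) (s : ℤ) (τ z₂ : ℂ) (j : ℤ) (p : ℂ)
    (hp : 1 - Complex.exp (cc * (p + (j:ℂ) * τ)) ≠ 0) :
    DifferentiableAt ℂ (gg m s τ z₂ j) p := by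
  unfold gg NN
  apply DifferentiableAt.div
  · fun_prop
  · fun_prop
  · exact hp

lemma hk_diffAt (m : ℕ) (s : ℤ) (τ z₂ : ℂ) (hτ : 0 < τ.im) (k : ℤ) (p : ℂ)
    (hp : ∀ j : ℤ, j ≠ k → 1 - Complex.exp (cc * (p + (j:ℂ) * τ)) ≠ 0) :
    DifferentiableAt ℂ (fun w => ∑' j : ℤ, if j = k then 0 else gg m s τ z₂ j w) p := by
  classical
  obtain ⟨J, hJ1, hJ⟩ := tail_bound m s τ z₂ hτ (|p.im| + 1) (by positivity)
  set U : Set ℂ := {w : ℂ | |w.im| < |p.im| + 1} with hU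
  have hUopen : IsOpen U := by
    have : U = Complex.im ⁻¹' (Set.Ioo (-(|p.im| + 1)) (|p.im| + 1)) := by
      ext w; simp [hU, abs_lt]
    rw [this]; exact isOpen_Ioo.preimage Complex.continuous_im
  have hpU : p ∈ U := by simp [hU]
  set S : Finset ℤ := insert k (Finset.Icc (-(J:ℤ)) (J:ℤ)) with hS
  have hGsumm : ∀ w : ℂ, Summable (fun j : ℤ => if j = k then 0 else gg m s τ z₂ j w) := by
    intro w
    apply (gg_summable m s τ z₂ hτ w).summable_of_eq_zero_or_self
    intro j
    by_cases h : j = k <;> simp [h]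
  have key : (fun w => ∑' j : ℤ, if j = k then 0 else gg m s τ z₂ j w)
      = (fun w => (∑ j ∈ S, if j = k then 0 else gg m s τ z₂ j w)
        + ∑' j : ((S : Set ℤ)ᶜ : Set ℤ), (if (j:ℤ) = k then 0 else gg m s τ z₂ (j:ℤ) w)) := by
    funext w
    exact (Summable.sum_add_tsum_compl (hGsumm w)).symm
  rw [key]
  apply DifferentiableAt.add
  · apply DifferentiableAt.fun_sum
    intro j hj
    by_cases hjk : j = k
    · simp only [if_pos hjk]; exact differentiableAt_const 0
    · simp only [if_neg hjk]; exact gg_diffAt m s τ z₂ j p (hp j hjk)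
  · have hbig : ∀ j : ((S : Set ℤ)ᶜ : Set ℤ), (J:ℤ) ≤ |(j:ℤ)| := by
      intro i
      have hj := i.2
      simp only [hS, Set.mem_compl_iff, Finset.coe_insert, Set.mem_insert_iff, Finset.coe_Icc,
        Set.mem_Icc, not_or, not_and_or, not_le] at hj
      exact le_abs.mpr (by omega)
    have hne : ∀ j : ((S : Set ℤ)ᶜ : Set ℤ), (j:ℤ) ≠ k := by
      intro i
      have hj := i.2
      simp only [hS, Set.mem_compl_iff, Finset.coe_insert, Set.mem_insert_iff, Finset.coe_Icc,
        Set.mem_Icc, not_or] at hj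
      exact hj.1
    have hdiff : DifferentiableOn ℂ
        (fun w => ∑' j : ((S : Set ℤ)ᶜ : Set ℤ), (if (j:ℤ) = k then 0 else gg m s τ z₂ (j:ℤ) w)) U := by
      apply differentiableOn_tsum_of_summable_norm
        (u := fun j : ((S : Set ℤ)ᶜ : Set ℤ) => 2 * Real.exp (-1) ^ (j:ℤ).natAbs)
      · exact u_summable.subtype _
      · intro i
        simp only [if_neg (hne i)]
        intro w hw
        refine (gg_diffAt m s τ z₂ (i:ℤ) w ?_).differentiableWithinAt
        have := (hJ (i:ℤ) (hbig i) w (le_of_lt hw)).1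
        intro h0
        rw [h0] at this
        simp at this
        linarith
      · exact hUopen
      · intro i w hw
        simp only [if_neg (hne i)]
        exact (hJ (i:ℤ) (hbig i) w (le_of_lt hw)).2
    exact hdiff.differentiableAt (hUopen.mem_nhds hpU)

/-- As a function of `z₁`, `Φ₁` is holomorphic away from the lattice `ℤ + τℤ` and has a
simple pole at each lattice point `n + jτ` with residue `−(1/(2πi)) e^{−2πij(m+1)z₂}`. -/
theorem stmt2 (m : ℕ) (s : ℤ) (hs0 : 0 ≤ s) (hs1 : s ≤ (m : ℤ))
    (τ z₂ : ℂ) (hτ : 0 < τ.im) :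
    (∀ z₁ : ℂ, (∀ n j : ℤ, z₁ ≠ (n : ℂ) + (j : ℂ) * τ) →
      DifferentiableAt ℂ (fun w => Phi1 m s τ w z₂) z₁) ∧
    (∀ n j : ℤ,
      Filter.Tendsto (fun w => (w - ((n : ℂ) + (j : ℂ) * τ)) * Phi1 m s τ w z₂)
        (nhdsWithin ((n : ℂ) + (j : ℂ) * τ) {((n : ℂ) + (j : ℂ) * τ)}ᶜ)
        (nhds (-(1 / (2 * (Real.pi : ℂ) * I)) *
          Complex.exp (-(2 * (Real.pi : ℂ) * I) * (j : ℂ) * ((m : ℂ) + 1) * z₂)))) := by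
  constructor
  · intro z₁ hz₁
    have hden : ∀ j : ℤ, 1 - Complex.exp (cc * (z₁ + (j:ℂ)*τ)) ≠ 0 := by
      intro j h
      have h1 : Complex.exp (cc * (z₁ + (j:ℂ)*τ)) = 1 := (sub_eq_zero.mp h).symm
      rw [Complex.exp_eq_one_iff] at h1
      obtain ⟨n, hn⟩ := h1
      have h2 : z₁ + (j:ℂ)*τ = n := by
        apply mul_left_cancel₀ cc_ne
        rw [hn, cc]; ring
      exact hz₁ n (-j) (by push_cast; linear_combination h2)
    have heq : (fun w => Phi1 m s τ w z₂) = fun w =>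
        gg m s τ z₂ 0 w + ∑' j : ℤ, if j = 0 then 0 else gg m s τ z₂ j w := by
      funext w
      rw [phi1_eq, Summable.tsum_eq_add_tsum_ite (gg_summable m s τ z₂ hτ w) 0]
    rw [heq]
    exact (gg_diffAt m s τ z₂ 0 z₁ (hden 0)).add
      (hk_diffAt m s τ z₂ hτ 0 z₁ fun j _ => hden j)
  · intro n j
    set p : ℂ := (n:ℂ) + (j:ℂ)*τ with hpdef
    set k : ℤ := -j with hkdef
    have hk : ((k:ℤ):ℂ) = -(j:ℂ) := by rw [hkdef]; push_cast; ring
    have hτ0 : τ.im ≠ 0 := ne_of_gt hτ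
    have hden : ∀ j' : ℤ, j' ≠ k → 1 - Complex.exp (cc * (p + (j':ℂ)*τ)) ≠ 0 := by
      intro j' hj' h
      have h1 : Complex.exp (cc * (p + (j':ℂ)*τ)) = 1 := (sub_eq_zero.mp h).symm
      rw [Complex.exp_eq_one_iff] at h1
      obtain ⟨n', hn'⟩ := h1
      have h2 : p + (j':ℂ)*τ = n' := by
        apply mul_left_cancel₀ cc_ne
        rw [hn', cc]; ring
      have h3 := congrArg Complex.im h2
      simp [hpdef] at h3
      have h5 : ((j:ℝ) + (j':ℝ)) = 0 := by
        rcases mul_eq_zero.mp (show ((j:ℝ) + (j':ℝ)) * τ.im = 0 by linarith) with h | h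
        · exact h
        · exact absurd h hτ0
      have h6 : j + j' = 0 := by exact_mod_cast h5
      exact hj' (by omega)
    have hsplit : ∀ w, Phi1 m s τ w z₂
        = gg m s τ z₂ k w + ∑' j' : ℤ, if j' = k then 0 else gg m s τ z₂ j' w :=
      fun w => by rw [phi1_eq, Summable.tsum_eq_add_tsum_ite (gg_summable m s τ z₂ hτ w) k]
    have hdenk : ∀ w : ℂ, 1 - Complex.exp (cc * (w + (k:ℂ)*τ))
        = 1 - Complex.exp (cc * (w - p)) := by
      intro w
      congr 1
      rw [show cc * (w + (k:ℂ)*τ) = cc * (w - p) + (n:ℂ) * (2*(Real.pi:ℂ)*I) by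
        rw [hk, hpdef, cc]; ring]
      rw [Complex.exp_add, Complex.exp_int_mul_two_pi_mul_I, mul_one]
    have hslope : HasDerivAt (fun w => 1 - Complex.exp (cc*(w - p))) (-cc) p := by
      have h1 : HasDerivAt (fun w : ℂ => cc*(w-p)) cc p := by
        simpa using ((hasDerivAt_id p).sub_const p).const_mul cc
      have h3 := (h1.cexp).const_sub 1
      simpa using h3
    have htend0 := hasDerivAt_iff_tendsto_slope.mp hslope
    have htend1 := htend0.inv₀ (neg_ne_zero.mpr cc_ne)
    have hslope_eq : ∀ w : ℂ,
        (slope (fun w => 1 - Complex.exp (cc*(w-p))) p w)⁻¹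
          = (w - p) / (1 - Complex.exp (cc*(w-p))) := by
      intro w
      rw [slope_def_field]
      simp only [sub_self, mul_zero, Complex.exp_zero]
      rw [sub_zero, inv_div]
    have hcont : Continuous (fun w => Complex.exp (cc * NN m s τ z₂ k w)) := by
      unfold NN; fun_prop
    have htendNum : Filter.Tendsto (fun w => Complex.exp (cc * NN m s τ z₂ k w))
        (nhdsWithin p {p}ᶜ) (nhds (Complex.exp (cc * NN m s τ z₂ k p))) :=
      (hcont.tendsto p).mono_left nhdsWithin_le_nhds
    have hT1 : Filter.Tendsto (fun w => (w - p) * gg m s τ z₂ k w)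
        (nhdsWithin p {p}ᶜ) (nhds ((-cc)⁻¹ * Complex.exp (cc * NN m s τ z₂ k p))) := by
      refine Filter.Tendsto.congr ?_ (htend1.mul htendNum)
      intro w
      unfold gg
      rw [hdenk w, hslope_eq w]
      ring
    have hT2 : Filter.Tendsto
        (fun w => (w - p) * ∑' j' : ℤ, if j' = k then 0 else gg m s τ z₂ j' w)
        (nhdsWithin p {p}ᶜ) (nhds 0) := by
      have hc := (hk_diffAt m s τ z₂ hτ k p hden).continuousAt
      have h1 : Filter.Tendsto (fun w : ℂ => w - p) (nhdsWithin p {p}ᶜ) (nhds 0) := by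
        have := ((continuous_id.sub (continuous_const (y := p))).tendsto p).mono_left
          (nhdsWithin_le_nhds (s := {p}ᶜ))
        simpa [Pi.sub_def] using this
      have := h1.mul (hc.tendsto.mono_left nhdsWithin_le_nhds)
      simpa using this
    have hfinal := hT1.add hT2
    rw [add_zero] at hfinal
    have hcong : ∀ w, (w - p) * gg m s τ z₂ k w
        + (w - p) * ∑' j' : ℤ, (if j' = k then 0 else gg m s τ z₂ j' w)
        = (w - p) * Phi1 m s τ w z₂ := fun w => by rw [hsplit w]; ring
    have hval : (-cc)⁻¹ * Complex.exp (cc * NN m s τ z₂ k p)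
        = -(1 / (2 * (Real.pi : ℂ) * I)) *
          Complex.exp (-(2 * (Real.pi : ℂ) * I) * (j : ℂ) * ((m : ℂ) + 1) * z₂) := by
      have harg : cc * NN m s τ z₂ k p
          = -(2 * (Real.pi : ℂ) * I) * (j : ℂ) * ((m : ℂ) + 1) * z₂
            + ((-(((m:ℤ)+1)*j + s)*n : ℤ):ℂ) * (2*(Real.pi:ℂ)*I) := by
        rw [NN, cc, hk, hpdef]; push_cast; ring
      rw [harg, Complex.exp_add, Complex.exp_int_mul_two_pi_mul_I, mul_one, cc,
        inv_neg, one_div]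
    rw [← hval]
    exact hfinal.congr hcong
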